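/- The sequent !(r / (p / q)), s → s is not derivable in !L*, where p, q, r, s are distinct variables. -/

import Mathlib

/-- Formulae (types) of the Lambek calculus with a modality:
`var` = primitive type, `div B A` = B / A, `ldiv A B` = A \ B, `bang A` = !A. -/
inductive Fm : Type
  | var : ℕ → Fm
  | div : Fm → Fm → Fm
  | ldiv : Fm → Fm → Fm
  | bang : Fm → Fm
  deriving DecidableEq

open Fm

/-- The calculus !L*: the Lambek calculus L* (with empty antecedents allowed)
extended with a relevant modality `!` with rules (!→), (→!), (perm₁), (perm₂), (contr). -/
inductive BangL : List Fm → Fm → Prop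
  | ax (A : Fm) : BangL [A] A
  | divL (Γ Δ₁ Δ₂ : List Fm) (A B C : Fm) :
      BangL Γ A → BangL (Δ₁ ++ B :: Δ₂) C →
      BangL (Δ₁ ++ div B A :: (Γ ++ Δ₂)) C
  | divR (Γ : List Fm) (A B : Fm) :
      BangL (Γ ++ [A]) B → BangL Γ (div B A)
  | ldivL (Γ Δ₁ Δ₂ : List Fm) (A B C : Fm) :
      BangL Γ A → BangL (Δ₁ ++ B :: Δ₂) C →
      BangL (Δ₁ ++ Γ ++ ldiv A B :: Δ₂) C
  | ldivR (Γ : List Fm) (A B : Fm) :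
      BangL (A :: Γ) B → BangL Γ (ldiv A B)
  | bangL (Γ₁ Γ₂ : List Fm) (A C : Fm) :
      BangL (Γ₁ ++ A :: Γ₂) C → BangL (Γ₁ ++ bang A :: Γ₂) C
  | bangR (Γ : List Fm) (B : Fm) :
      BangL (Γ.map bang) B → BangL (Γ.map bang) (bang B)
  | perm1 (Δ₁ Γ Δ₂ : List Fm) (A C : Fm) :
      BangL (Δ₁ ++ bang A :: (Γ ++ Δ₂)) C → BangL (Δ₁ ++ Γ ++ bang A :: Δ₂) C
  | perm2 (Δ₁ Γ Δ₂ : List Fm) (A C : Fm) :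
      BangL (Δ₁ ++ Γ ++ bang A :: Δ₂) C → BangL (Δ₁ ++ bang A :: (Γ ++ Δ₂)) C
  | contr (Δ₁ Δ₂ : List Fm) (A C : Fm) :
      BangL (Δ₁ ++ bang A :: bang A :: Δ₂) C → BangL (Δ₁ ++ bang A :: Δ₂) C

section Model
open Fm

/-- Interpretation of formulas as subsets of the monoid (Bool, ∨):
`⟦q⟧ = ⟦s⟧ = {false}`, all other variables `= ∅`, `!A` interpreted as `A`. -/
def ev (q s : ℕ) : Fm → Bool → Prop
  | .var n => fun x => (n = q ∨ n = s) ∧ x = false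
  | .div B A => fun x => ∀ y, ev q s A y → ev q s B (x || y)
  | .ldiv A B => fun x => ∀ y, ev q s A y → ev q s B (y || x)
  | .bang A => ev q s A

def evL (q s : ℕ) : List Fm → Bool → Prop
  | [] => fun x => x = false
  | A :: Γ => fun x => ∃ a b, ev q s A a ∧ evL q s Γ b ∧ x = (a || b)

lemma evL_append (q s : ℕ) (Γ Δ : List Fm) (x : Bool) :
    evL q s (Γ ++ Δ) x ↔ ∃ a b, evL q s Γ a ∧ evL q s Δ b ∧ x = (a || b) := by
  induction Γ generalizing x with
  | nil =>
    simp only [List.nil_append, evL]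
    constructor
    · intro h; exact ⟨false, x, rfl, h, by simp⟩
    · rintro ⟨a, b, rfl, h, rfl⟩; simpa
  | cons A Γ ih =>
    simp only [List.cons_append, evL]
    constructor
    · rintro ⟨a, e, ha, he, rfl⟩
      obtain ⟨b, c, hb, hc, rfl⟩ := (ih e).mp he
      exact ⟨a || b, c, ⟨a, b, ha, hb, rfl⟩, hc, by simp [Bool.or_assoc]⟩
    · rintro ⟨e, c, ⟨a, b, ha, hb, rfl⟩, hc, rfl⟩
      exact ⟨a, b || c, ha, (ih _).mpr ⟨b, c, hb, hc, rfl⟩, by simp [Bool.or_assoc]⟩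

lemma evL_bang (q s : ℕ) (Γ₁ Γ₂ : List Fm) (A : Fm) (x : Bool) :
    evL q s (Γ₁ ++ bang A :: Γ₂) x ↔ evL q s (Γ₁ ++ A :: Γ₂) x := by
  induction Γ₁ generalizing x with
  | nil => exact Iff.rfl
  | cons B Γ₁ ih =>
    simp only [List.cons_append, evL]
    exact exists_congr fun a => exists_congr fun b => by rw [show evL q s (Γ₁ ++ (A.bang :: Γ₂)) b ↔ evL q s (Γ₁ ++ (A :: Γ₂)) b from ih b]

lemma sound (q s : ℕ) {Γ : List Fm} {C : Fm} (h : BangL Γ C) :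
    ∀ x, evL q s Γ x → ev q s C x := by
  induction h with
  | ax A => rintro x ⟨a, b, ha, hb, rfl⟩; cases hb; simpa using ha
  | divL Γ Δ₁ Δ₂ A B C _ _ ih1 ih2 =>
    intro x hx
    obtain ⟨d1, e, hd1, he, rfl⟩ := (evL_append q s _ _ _).mp hx
    obtain ⟨f, e', hf, he', rfl⟩ := he
    obtain ⟨g, d2, hg, hd2, rfl⟩ := (evL_append q s _ _ _).mp he'
    refine ih2 _ ((evL_append q s _ _ _).mpr
      ⟨d1, f || g || d2, hd1, ⟨f || g, d2, hf g (ih1 g hg), hd2, rfl⟩, by simp [Bool.or_assoc]⟩)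
  | divR Γ A B _ ih =>
    intro x hx y hy
    exact ih _ ((evL_append q s Γ [A] _).mpr ⟨x, y, hx, ⟨y, false, hy, rfl, by simp⟩, by simp⟩)
  | ldivL Γ Δ₁ Δ₂ A B C _ _ ih1 ih2 =>
    intro x hx
    obtain ⟨e, e', he, he', rfl⟩ := (evL_append q s _ _ _).mp hx
    obtain ⟨d1, g, hd1, hg, rfl⟩ := (evL_append q s _ _ _).mp he
    obtain ⟨f, d2, hf, hd2, rfl⟩ := he'
    refine ih2 _ ((evL_append q s _ _ _).mpr
      ⟨d1, (g || f) || d2, hd1, ⟨g || f, d2, hf g (ih1 g hg), hd2, rfl⟩, by simp [Bool.or_assoc]⟩)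
  | ldivR Γ A B _ ih =>
    intro x hx y hy
    exact ih _ ⟨y, x, hy, hx, rfl⟩
  | bangL Γ₁ Γ₂ A C _ ih =>
    intro x hx
    exact ih x ((evL_bang q s Γ₁ Γ₂ A x).mp hx)
  | bangR Γ B _ ih => exact ih
  | perm1 Δ₁ Γ Δ₂ A C _ ih =>
    intro x hx
    obtain ⟨e, e', he, he', rfl⟩ := (evL_append q s _ _ _).mp hx
    obtain ⟨d1, g, hd1, hg, rfl⟩ := (evL_append q s _ _ _).mp he
    obtain ⟨a, d2, ha, hd2, rfl⟩ := he'
    refine ih _ ((evL_append q s _ _ _).mpr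
      ⟨d1, a || (g || d2), hd1,
        ⟨a, g || d2, ha, (evL_append q s _ _ _).mpr ⟨g, d2, hg, hd2, rfl⟩, rfl⟩,
        by cases a <;> cases g <;> cases d1 <;> cases d2 <;> rfl⟩)
  | perm2 Δ₁ Γ Δ₂ A C _ ih =>
    intro x hx
    obtain ⟨d1, e, hd1, he, rfl⟩ := (evL_append q s _ _ _).mp hx
    obtain ⟨a, e', ha, he', rfl⟩ := he
    obtain ⟨g, d2, hg, hd2, rfl⟩ := (evL_append q s _ _ _).mp he'
    refine ih _ ((evL_append q s _ _ _).mpr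
      ⟨d1 || g, a || d2, (evL_append q s _ _ _).mpr ⟨d1, g, hd1, hg, rfl⟩,
        ⟨a, d2, ha, hd2, rfl⟩,
        by cases a <;> cases g <;> cases d1 <;> cases d2 <;> rfl⟩)
  | contr Δ₁ Δ₂ A C _ ih =>
    intro x hx
    obtain ⟨d1, e, hd1, he, rfl⟩ := (evL_append q s _ _ _).mp hx
    obtain ⟨a, d2, ha, hd2, rfl⟩ := he
    refine ih _ ((evL_append q s _ _ _).mpr
      ⟨d1, a || (a || d2), hd1, ⟨a, a || d2, ha, ⟨a, d2, ha, hd2, rfl⟩, rfl⟩,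
        by cases a <;> cases d2 <;> cases d1 <;> rfl⟩)

end Model

/-- The sequent !(r / (p / q)), s → s is not derivable in !L*. -/
theorem stmt4 (p q r s : ℕ) (hpq : p ≠ q) (hpr : p ≠ r) (hps : p ≠ s)
    (hqr : q ≠ r) (hqs : q ≠ s) (hrs : r ≠ s) :
    ¬ BangL [bang (div (var r) (div (var p) (var q))), var s] (var s) := by
  intro h
  have hs := sound q s h true ?_
  · exact absurd hs.2 (by simp)
  · refine ⟨true, false, ?_, ⟨false, false, ⟨Or.inr rfl, rfl⟩, rfl, rfl⟩, rfl⟩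
    intro y hy
    exact absurd (hy false ⟨Or.inl rfl, rfl⟩).1 (by simpa using ⟨hpq, hps⟩)
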